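/- Let μ = (δ₁ + δ₋₁)/2 on the unit circle and let μ ⨯ μ denote the multiplicative boolean convolution, characterized by F_{μ⨯μ}(z) = F_μ(z)², where F_ν(z) = χ_ν(z)/z and χ_ν = ψ_ν/(1+ψ_ν). Then ψ_{μ⨯μ}(z) = z³/(1−z³) and the Herglotz transform satisfies H_{μ⨯μ}(z) = (1+z³)/(1−z³) on the open unit disc. -/

import Mathlib

open MeasureTheory Metric
open scoped ENNReal

/-- The moment generating function `ψ_ν`. -/
noncomputable def psi (ν : Measure ℂ) (z : ℂ) : ℂ := ∫ ζ, z / (ζ - z) ∂ν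

/-- The `F`-transform `F_ν(z) = χ_ν(z)/z` where `χ_ν = ψ_ν/(1+ψ_ν)`. -/
noncomputable def Ftrans (ν : Measure ℂ) (z : ℂ) : ℂ :=
  (psi ν z / (1 + psi ν z)) / z

lemma psi_mu (z : ℂ) (hz1 : (1 : ℂ) - z ≠ 0) (hz2 : (1 : ℂ) + z ≠ 0) :
    psi ((1 / 2 : ℝ≥0∞) • Measure.dirac (1 : ℂ)
            + (1 / 2 : ℝ≥0∞) • Measure.dirac (-1 : ℂ)) z
      = z ^ 2 / (1 - z ^ 2) := by
  have h1 : Integrable (fun ζ : ℂ => z / (ζ - z)) ((1/2 : ℝ≥0∞) • Measure.dirac (1 : ℂ)) :=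
    ((integrable_const _).congr (ae_eq_dirac _).symm).smul_measure (by norm_num)
  have h2 : Integrable (fun ζ : ℂ => z / (ζ - z)) ((1/2 : ℝ≥0∞) • Measure.dirac (-1 : ℂ)) :=
    ((integrable_const _).congr (ae_eq_dirac _).symm).smul_measure (by norm_num)
  rw [psi, integral_add_measure h1 h2, integral_smul_measure, integral_smul_measure,
    integral_dirac, integral_dirac]
  have : ((1/2 : ℝ≥0∞).toReal : ℂ) = 1/2 := by norm_num
  rw [Complex.real_smul, Complex.real_smul, this]
  have h3 : (-1 : ℂ) - z ≠ 0 := by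
    intro h; apply hz2; linear_combination -h
  have h4 : (1 : ℂ) - z ^ 2 ≠ 0 := by
    intro h; rcases mul_eq_zero.1 (show (1 - z) * (1 + z) = 0 by linear_combination h) with h | h
    · exact hz1 h
    · exact hz2 h
  field_simp
  ring

theorem stmt9 (μ ν : Measure ℂ) [IsProbabilityMeasure ν]
    (hν : ∀ᵐ ζ ∂ν, ‖ζ‖ = 1)
    (hμ : μ = (1 / 2 : ℝ≥0∞) • Measure.dirac (1 : ℂ)
            + (1 / 2 : ℝ≥0∞) • Measure.dirac (-1 : ℂ))
    (hbool : ∀ z ∈ ball (0 : ℂ) 1, z ≠ 0 → Ftrans ν z = (Ftrans μ z) ^ 2) :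
    ∀ z ∈ ball (0 : ℂ) 1,
      psi ν z = z ^ 3 / (1 - z ^ 3) ∧
      1 + 2 * psi ν z = (1 + z ^ 3) / (1 - z ^ 3) := by
  intro z hz
  rw [mem_ball, dist_zero_right] at hz
  have hz3 : (1 : ℂ) - z ^ 3 ≠ 0 := by
    intro h
    have : ‖z ^ 3‖ = 1 := by
      have : z ^ 3 = 1 := by linear_combination -h
      rw [this]; simp
    rw [norm_pow] at this
    have := pow_lt_one₀ (norm_nonneg z) hz (three_ne_zero)
    linarith
  have key : psi ν z = z ^ 3 / (1 - z ^ 3) := by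
    by_cases hz0 : z = 0
    · subst hz0; simp [psi]
    · have hz1 : (1 : ℂ) - z ≠ 0 := by
        intro h
        have : z = 1 := by linear_combination -h
        rw [this] at hz; simp at hz
      have hz2 : (1 : ℂ) + z ≠ 0 := by
        intro h
        have : z = -1 := by linear_combination h
        rw [this] at hz; simp at hz
      have h4 : (1 : ℂ) - z ^ 2 ≠ 0 := by
        intro h; rcases mul_eq_zero.1 (show (1 - z) * (1 + z) = 0 by linear_combination h) with h | h
        · exact hz1 h
        · exact hz2 h
      have hFμ : Ftrans μ z = z := by
        rw [Ftrans, hμ, psi_mu z hz1 hz2]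
        have h5 : 1 + z ^ 2 / (1 - z ^ 2) ≠ 0 := by
          have e : 1 + z ^ 2 / (1 - z ^ 2) = 1 / (1 - z ^ 2) := by field_simp; ring
          rw [e]
          exact one_div_ne_zero h4
        field_simp
        ring
      have hB := hbool z (by simpa [mem_ball, dist_zero_right] using hz) hz0
      rw [hFμ, Ftrans, div_eq_iff hz0] at hB
      have hden : 1 + psi ν z ≠ 0 := by
        intro h
        rw [h, div_zero] at hB
        have : z ^ 3 = 0 := by linear_combination -hB
        exact hz0 (pow_eq_zero_iff three_ne_zero |>.1 this)
      rw [div_eq_iff hden] at hB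
      rw [eq_div_iff hz3]
      linear_combination hB
  refine ⟨key, ?_⟩
  rw [key]
  field_simp
  ring
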